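/- arXiv:2505.05005 — 2 statements merged into one kernel-verified Lean document; each statement's English description precedes it below -/
import Mathlib

section
/- Let f, g : ℤ_p → ℤ_p be strictly differentiable, and let △ be the operator △(f) = min{ inf_{k≥1} v_p((f(k) − f(k_−))/(k − k_−)), 1 + v_p(f(0)) }. Then △(f·g) ≥ min{△(f), △(g)}. -/
/-- `kminus p k` is `k` with its leading `p`-adic digit deleted. -/
def kminus (p k : ℕ) : ℕ := k % p ^ (Nat.log p k)

/-- `TriangleGE p f c` expresses `△(f) ≥ c` for `f : ℤ_p → ℤ_p`, i.e. both
`v_p((f(k) - f(k₋))/(k - k₋)) ≥ c` for all `k ≥ 1` and `1 + v_p(f(0)) ≥ c`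
(with `v_p(0) = +∞`), stated in terms of norms. -/
def TriangleGE (p : ℕ) [Fact p.Prime] (f : ℤ_[p] → ℤ_[p]) (c : ℤ) : Prop :=
  (∀ k : ℕ, 1 ≤ k →
    ‖f (k : ℤ_[p]) - f (kminus p k : ℤ_[p])‖ ≤
      ‖((k : ℤ_[p]) - (kminus p k : ℤ_[p]))‖ * (p : ℝ) ^ (-c))
  ∧ ‖f 0‖ ≤ (p : ℝ) ^ (-(c - 1))

theorem triangle_mul (p : ℕ) [Fact p.Prime]
    (f g : ℤ_[p] → ℤ_[p])
    (hf : ∃ h : ℤ_[p] × ℤ_[p] → ℤ_[p],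
      Continuous h ∧ ∀ x y : ℤ_[p], f x - f y = (x - y) * h (x, y))
    (hg : ∃ h : ℤ_[p] × ℤ_[p] → ℤ_[p],
      Continuous h ∧ ∀ x y : ℤ_[p], g x - g y = (x - y) * h (x, y))
    (c : ℤ) (hfc : TriangleGE p f c) (hgc : TriangleGE p g c) :
    TriangleGE p (fun t => f t * g t) c := by
  constructor
  · intro k hk
    have h1 := hfc.1 k hk
    have h2 := hgc.1 k hk
    set a : ℤ_[p] := (k : ℤ_[p])
    set b : ℤ_[p] := (kminus p k : ℤ_[p])
    have key : f a * g a - f b * g b = f a * (g a - g b) + (f a - f b) * g b := by ring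
    simp only []
    rw [key]
    have hA : ‖f a * (g a - g b)‖ ≤ ‖a - b‖ * (p : ℝ) ^ (-c) := by
      rw [norm_mul]
      calc ‖f a‖ * ‖g a - g b‖ ≤ 1 * (‖a - b‖ * (p : ℝ) ^ (-c)) := by
            apply mul_le_mul (f a).norm_le_one h2 (norm_nonneg _) zero_le_one
        _ = ‖a - b‖ * (p : ℝ) ^ (-c) := one_mul _
    have hB : ‖(f a - f b) * g b‖ ≤ ‖a - b‖ * (p : ℝ) ^ (-c) := by
      rw [norm_mul]
      calc ‖f a - f b‖ * ‖g b‖ ≤ (‖a - b‖ * (p : ℝ) ^ (-c)) * 1 := by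
            apply mul_le_mul h1 (g b).norm_le_one (norm_nonneg _)
            positivity
        _ = ‖a - b‖ * (p : ℝ) ^ (-c) := mul_one _
    exact le_trans (PadicInt.nonarchimedean _ _) (max_le hA hB)
  · have h1 := hfc.2
    simp only []
    rw [norm_mul]
    calc ‖f 0‖ * ‖g 0‖ ≤ (p : ℝ) ^ (-(c - 1)) * 1 := by
          apply mul_le_mul h1 (g 0).norm_le_one (norm_nonneg _)
          positivity
      _ = (p : ℝ) ^ (-(c - 1)) := mul_one _
end

section
/- For every integer s ≥ 2, (1/(s−1)) ∫_{ℤ_2} (t + 1/2)^{−(s−1)} dt = 2^s · ζ_2(s), where ζ_2(s) is the 2-adic zeta value defined as (1/(4(s−1))) [ ∫_{ℤ_2} (1+4t)^{−(s−1)} dt + ∫_{ℤ_2} (3+4t)^{−(s−1)} dt ]. -/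
open Filter

/-- `I` is the Volkenborn integral of `f : ℤ_2 → ℚ_2`. -/
def IsVolkenbornIntegral (f : ℤ_[2] → ℚ_[2]) (I : ℚ_[2]) : Prop :=
  Tendsto (fun N : ℕ => ((2 : ℚ_[2]) ^ N)⁻¹ * ∑ k ∈ Finset.range (2 ^ N), f (k : ℤ_[2]))
    atTop (nhds I)

private lemma sum_range_two_mul {M : Type*} [AddCommMonoid M] (f : ℕ → M) (n : ℕ) :
    ∑ k ∈ Finset.range (2 * n), f k = ∑ j ∈ Finset.range n, (f (2 * j) + f (2 * j + 1)) := by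
  induction n with
  | zero => simp
  | succ n ih =>
    rw [Nat.mul_succ, Finset.sum_range_succ, Finset.sum_range_succ, Finset.sum_range_succ, ih,
      add_assoc]

theorem volkenborn_shift_by_half (s : ℕ) (hs : 2 ≤ s) (I₁ I₂ I₃ : ℚ_[2])
    (hI₁ : IsVolkenbornIntegral (fun t => (((t : ℚ_[2]) + 1 / 2) ^ (s - 1))⁻¹) I₁)
    (hI₂ : IsVolkenbornIntegral (fun t => ((1 + 4 * (t : ℚ_[2])) ^ (s - 1))⁻¹) I₂)
    (hI₃ : IsVolkenbornIntegral (fun t => ((3 + 4 * (t : ℚ_[2])) ^ (s - 1))⁻¹) I₃) :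
    (1 / ((s : ℚ_[2]) - 1)) * I₁ =
      2 ^ s * ((1 / (4 * ((s : ℚ_[2]) - 1))) * (I₂ + I₃)) := by
  have hs1 : ((s : ℚ_[2]) - 1) ≠ 0 := by
    refine sub_ne_zero.mpr fun h => ?_
    have hh : (s : ℚ_[2]) = ((1 : ℕ) : ℚ_[2]) := by simpa using h
    have := Nat.cast_injective (R := ℚ_[2]) hh
    omega
  -- key: I₁ = 2^(s-2) * (I₂ + I₃)
  have key : I₁ = 2 ^ (s - 2) * (I₂ + I₃) := by
    have h1 : Tendsto (fun N : ℕ =>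
        ((2 : ℚ_[2]) ^ (N + 1))⁻¹ * ∑ k ∈ Finset.range (2 ^ (N + 1)),
          ((((k : ℤ_[2]) : ℚ_[2]) + 1 / 2) ^ (s - 1))⁻¹) atTop (nhds I₁) :=
      hI₁.comp (tendsto_add_atTop_nat 1)
    have h2 : Tendsto (fun N : ℕ => (2 : ℚ_[2]) ^ (s - 2) *
        (((2 : ℚ_[2]) ^ N)⁻¹ * ∑ k ∈ Finset.range (2 ^ N),
            ((1 + 4 * ((k : ℤ_[2]) : ℚ_[2])) ^ (s - 1))⁻¹ +
         ((2 : ℚ_[2]) ^ N)⁻¹ * ∑ k ∈ Finset.range (2 ^ N),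
            ((3 + 4 * ((k : ℤ_[2]) : ℚ_[2])) ^ (s - 1))⁻¹)) atTop
        (nhds ((2 : ℚ_[2]) ^ (s - 2) * (I₂ + I₃))) :=
      (hI₂.add hI₃).const_mul _
    have heq : (fun N : ℕ =>
        ((2 : ℚ_[2]) ^ (N + 1))⁻¹ * ∑ k ∈ Finset.range (2 ^ (N + 1)),
          ((((k : ℤ_[2]) : ℚ_[2]) + 1 / 2) ^ (s - 1))⁻¹) = (fun N : ℕ =>
        (2 : ℚ_[2]) ^ (s - 2) *
        (((2 : ℚ_[2]) ^ N)⁻¹ * ∑ k ∈ Finset.range (2 ^ N),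
            ((1 + 4 * ((k : ℤ_[2]) : ℚ_[2])) ^ (s - 1))⁻¹ +
         ((2 : ℚ_[2]) ^ N)⁻¹ * ∑ k ∈ Finset.range (2 ^ N),
            ((3 + 4 * ((k : ℤ_[2]) : ℚ_[2])) ^ (s - 1))⁻¹)) := by
      funext N
      have hpow : 2 ^ (N + 1) = 2 * 2 ^ N := by ring
      rw [hpow, sum_range_two_mul]
      have hterm : ∀ j : ℕ,
          (((((2 * j : ℕ) : ℤ_[2]) : ℚ_[2]) + 1 / 2) ^ (s - 1))⁻¹ +
          (((((2 * j + 1 : ℕ) : ℤ_[2]) : ℚ_[2]) + 1 / 2) ^ (s - 1))⁻¹ =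
          2 ^ (s - 1) * (((1 + 4 * ((j : ℤ_[2]) : ℚ_[2])) ^ (s - 1))⁻¹ +
            ((3 + 4 * ((j : ℤ_[2]) : ℚ_[2])) ^ (s - 1))⁻¹) := by
        intro j
        have hc2 : (((2 : ℤ_[2]) : ℚ_[2])) = 2 := by norm_cast
        have e1 : ((((2 * j : ℕ) : ℤ_[2]) : ℚ_[2]) + 1 / 2) =
            (1 + 4 * ((j : ℤ_[2]) : ℚ_[2])) / 2 := by push_cast [hc2]; ring
        have e2 : ((((2 * j + 1 : ℕ) : ℤ_[2]) : ℚ_[2]) + 1 / 2) =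
            (3 + 4 * ((j : ℤ_[2]) : ℚ_[2])) / 2 := by push_cast [hc2]; ring
        rw [e1, e2, div_pow, div_pow]
        rw [div_eq_mul_inv, div_eq_mul_inv, mul_inv, mul_inv, inv_inv]
        ring
      rw [Finset.sum_congr rfl (fun j _ => hterm j), ← Finset.mul_sum,
        Finset.sum_add_distrib]
      have hsplit : (s : ℕ) - 1 = (s - 2) + 1 := by omega
      have h2pow : (2 : ℚ_[2]) ^ (s - 1) = 2 ^ (s - 2) * 2 := by
        rw [hsplit, pow_succ]
      rw [h2pow, pow_succ, mul_inv]
      ring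
    rw [heq] at h1
    exact tendsto_nhds_unique h1 h2
  rw [key]
  have h4 : (2 : ℚ_[2]) ^ s = 4 * 2 ^ (s - 2) := by
    conv_lhs => rw [show s = (s - 2) + 2 by omega]
    rw [pow_add]; ring
  rw [h4]
  field_simp
end
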